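/- Let $\mu$ be a probability measure on $\mathbb{R}$, $\lambda \in \mathbb{R}$, and $a, b, \eta > 0$ with $\operatorname{Im} g_\mu(\lambda + i\eta) \geq a$ and $\operatorname{Im} g_\mu(\lambda + iy) \leq b$ for all $y \geq \eta$. Let $I = [\lambda - s/2, \lambda + s/2]$ with $s \geq 2\eta$. Then $\mu(I)/s \leq b$, and if moreover $\rho := s/\eta \geq 8b/a$, then $\mu(I)/s \geq a/(2\rho)$. -/

import Mathlib

open MeasureTheory Complex

/-- The Cauchy–Stieltjes transform `g_μ(z) = ∫ (λ' - z)⁻¹ dμ(λ')`. -/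
noncomputable def stieltjes (μ : Measure ℝ) (z : ℂ) : ℂ := ∫ x, ((x : ℂ) - z)⁻¹ ∂μ

lemma kern_pos {y : ℝ} (hy : 0 < y) (lam x : ℝ) : 0 < y / ((x - lam)^2 + y^2) :=
  div_pos hy (by positivity)

lemma kern_cont {lam y : ℝ} (hy : 0 < y) :
    Continuous fun x : ℝ => y / ((x - lam)^2 + y^2) := by
  apply continuous_const.div (by continuity)
  intro x; positivity

lemma kern_integrable (μ : Measure ℝ) [IsFiniteMeasure μ] {lam y : ℝ} (hy : 0 < y) :
    Integrable (fun x : ℝ => y / ((x - lam)^2 + y^2)) μ := by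
  refine (integrable_const (1/y)).mono' ((kern_cont hy).aestronglyMeasurable) ?_
  filter_upwards with x
  rw [Real.norm_eq_abs, abs_of_pos (kern_pos hy lam x), div_le_div_iff₀ (by positivity) hy]
  nlinarith [sq_nonneg (x - lam)]

lemma im_stieltjes (μ : Measure ℝ) [IsFiniteMeasure μ] (lam : ℝ) {y : ℝ} (hy : 0 < y) :
    (stieltjes μ (lam + y * I)).im = ∫ x, y / ((x - lam)^2 + y^2) ∂μ := by
  have hpt : ∀ x : ℝ, (((x : ℂ) - (lam + y * I))⁻¹).im = y / ((x - lam)^2 + y^2) := by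
    intro x
    rw [Complex.inv_im]
    simp [Complex.normSq_apply]
    ring_nf
  have hne : ∀ x : ℝ, (x : ℂ) - (lam + y * I) ≠ 0 := by
    intro x h
    have := congrArg Complex.im h
    simp at this
    linarith
  have hint : Integrable (fun x : ℝ => ((x : ℂ) - (lam + y * I))⁻¹) μ := by
    refine (integrable_const (1/y)).mono' ?_ ?_
    · exact (Continuous.inv₀ (by continuity) hne).aestronglyMeasurable
    · filter_upwards with x
      rw [norm_inv]
      have h1 : y ≤ ‖(x : ℂ) - (lam + y * I)‖ := by
        have := Complex.abs_im_le_norm ((x : ℂ) - (lam + y * I))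
        simp at this
        calc y = |(-y : ℝ)| := by rw [abs_neg, abs_of_pos hy]
        _ ≤ _ := by simpa using this
      rw [one_div, inv_le_inv₀ (lt_of_lt_of_le hy h1) hy]
      exact h1
  rw [stieltjes]
  have h := integral_im (𝕜 := ℂ) hint
  calc (∫ x : ℝ, ((x : ℂ) - (lam + y * I))⁻¹ ∂μ).im
      = ∫ x : ℝ, RCLike.im (((x : ℂ) - (lam + y * I))⁻¹) ∂μ := h.symm
    _ = ∫ x : ℝ, y / ((x - lam)^2 + y^2) ∂μ :=
        integral_congr_ae (Filter.Eventually.of_forall fun x => hpt x)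

theorem weak_deconvolution (μ : Measure ℝ) [IsProbabilityMeasure μ]
    (lam a b η : ℝ) (ha : 0 < a) (hb : 0 < b) (hη : 0 < η)
    (hlow : a ≤ (stieltjes μ (lam + η * I)).im)
    (hup : ∀ y ≥ η, (stieltjes μ (lam + y * I)).im ≤ b)
    (s : ℝ) (hs : 2 * η ≤ s) :
    (μ (Set.Icc (lam - s / 2) (lam + s / 2))).toReal / s ≤ b ∧
      (s / η ≥ 8 * b / a →
        a / (2 * (s / η)) ≤ (μ (Set.Icc (lam - s / 2) (lam + s / 2))).toReal / s) := by
  have hspos : 0 < s := by linarith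
  have hy0 : (0:ℝ) < s / 2 := by linarith
  have hηy0 : η ≤ s / 2 := by linarith
  set Iset := Set.Icc (lam - s / 2) (lam + s / 2) with hIset
  have hImeas : MeasurableSet Iset := measurableSet_Icc
  set m := (μ Iset).toReal with hm
  have hmnn : 0 ≤ m := ENNReal.toReal_nonneg
  have hupper := hup (s/2) hηy0
  rw [im_stieltjes μ lam hy0] at hupper
  rw [im_stieltjes μ lam hη] at hlow
  have hint0 := kern_integrable μ (lam := lam) hy0
  have hintη := kern_integrable μ (lam := lam) hη
  have hwhole : ∫ x, (s/2) / ((x - lam)^2 + (s/2)^2) ∂μ ≤ b := hupper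
  -- upper bound
  have hub : m / s ≤ b := by
    have h1 : ∫ x in Iset, (1/s) ∂μ ≤ ∫ x in Iset, (s/2) / ((x - lam)^2 + (s/2)^2) ∂μ := by
      refine setIntegral_mono_on (integrable_const _).integrableOn hint0.integrableOn hImeas ?_
      intro x hx
      simp only [hIset, Set.mem_Icc] at hx
      rw [div_le_div_iff₀ hspos (by positivity)]
      nlinarith [hx.1, hx.2]
    have h4 : ∫ x in Iset, (s/2) / ((x - lam)^2 + (s/2)^2) ∂μ ≤
        ∫ x, (s/2) / ((x - lam)^2 + (s/2)^2) ∂μ :=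
      setIntegral_le_integral hint0 (Filter.Eventually.of_forall fun x => (kern_pos hy0 lam x).le)
    have h5 : ∫ x in Iset, (1/s) ∂μ = m * (1/s) := by
      rw [setIntegral_const]; simp [hm, Measure.real]
    have := h5 ▸ (h1.trans (h4.trans hwhole))
    calc m / s = m * (1/s) := by ring
      _ ≤ b := this
  refine ⟨hub, ?_⟩
  intro hρ
  -- tail estimate
  have hcompl : ∫ x in Isetᶜ, η / ((x - lam)^2 + η^2) ∂μ ≤ (4 * η / s) * b := by
    have h6 : ∫ x in Isetᶜ, η / ((x - lam)^2 + η^2) ∂μ ≤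
        ∫ x in Isetᶜ, (4 * η / s) * ((s/2) / ((x - lam)^2 + (s/2)^2)) ∂μ := by
      refine setIntegral_mono_on hintη.integrableOn (hint0.const_mul _).integrableOn
        hImeas.compl ?_
      intro x hx
      have h7 : (s/2)^2 ≤ (x - lam)^2 := by
        simp only [hIset, Set.mem_compl_iff, Set.mem_Icc, not_and_or, not_le] at hx
        rcases hx with h | h <;> nlinarith
      have heq : (4 * η / s) * ((s/2) / ((x - lam)^2 + (s/2)^2)) =
          2 * η / ((x - lam)^2 + (s/2)^2) := by
        field_simp; ring
      rw [heq, div_le_div_iff₀ (by positivity) (by positivity)]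
      nlinarith
    have h8 : ∫ x in Isetᶜ, (4 * η / s) * ((s/2) / ((x - lam)^2 + (s/2)^2)) ∂μ =
        (4 * η / s) * ∫ x in Isetᶜ, (s/2) / ((x - lam)^2 + (s/2)^2) ∂μ :=
      integral_const_mul _ _
    have h9 : ∫ x in Isetᶜ, (s/2) / ((x - lam)^2 + (s/2)^2) ∂μ ≤
        ∫ x, (s/2) / ((x - lam)^2 + (s/2)^2) ∂μ :=
      setIntegral_le_integral hint0 (Filter.Eventually.of_forall fun x => (kern_pos hy0 lam x).le)
    calc ∫ x in Isetᶜ, η / ((x - lam)^2 + η^2) ∂μ ≤ _ := h6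
      _ = _ := h8
      _ ≤ (4 * η / s) * b := by
          apply mul_le_mul_of_nonneg_left (h9.trans hwhole) (by positivity)
  -- bound on I
  have hI : ∫ x in Iset, η / ((x - lam)^2 + η^2) ∂μ ≤ m / η := by
    have h10 : ∫ x in Iset, η / ((x - lam)^2 + η^2) ∂μ ≤ ∫ x in Iset, (1/η) ∂μ := by
      refine setIntegral_mono_on hintη.integrableOn (integrable_const _).integrableOn hImeas ?_
      intro x _
      rw [div_le_div_iff₀ (by positivity) hη]
      nlinarith [sq_nonneg (x - lam)]
    have h11 : ∫ x in Iset, (1/η) ∂μ = m * (1/η) := by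
      rw [setIntegral_const]; simp [hm, Measure.real]
    calc ∫ x in Iset, η / ((x - lam)^2 + η^2) ∂μ ≤ m * (1/η) := h11 ▸ h10
      _ = m / η := by ring
  -- combine
  have hsplit : ∫ x, η / ((x - lam)^2 + η^2) ∂μ =
      (∫ x in Iset, η / ((x - lam)^2 + η^2) ∂μ) + ∫ x in Isetᶜ, η / ((x - lam)^2 + η^2) ∂μ :=
    (integral_add_compl hImeas hintη).symm
  have hρ' : 8 * b * η ≤ s * a := by
    rw [ge_iff_le, div_le_div_iff₀ ha hη] at hρ
    linarith
  have htail : (4 * η / s) * b ≤ a / 2 := by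
    rw [div_mul_eq_mul_div, div_le_div_iff₀ hspos two_pos]
    nlinarith
  have hmain : a / 2 ≤ m / η := by
    have := hlow
    rw [hsplit] at this
    linarith [hI, hcompl, htail]
  have hmain' : a * η ≤ 2 * m := by
    rw [div_le_div_iff₀ two_pos hη] at hmain
    linarith
  rw [div_le_div_iff₀ (by positivity : (0:ℝ) < 2 * (s / η)) hspos]
  have heq : m * (2 * (s / η)) = 2 * m * s / η := by ring
  rw [heq, le_div_iff₀ hη]
  nlinarith
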